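/- Let p ∈ ℝ^d be irrational (p ∉ ℝ·ℤ^d) and let v : ℝ^d → ℝ be ℤ^d-periodic. Then for every t ∈ ℝ one has the identity of superlevel sets {x ∈ ℝ^d : v(x) + p·x > t} = ⋃_{q ∈ ℤ^d, q·p > t} ( q + {x ∈ ℝ^d : v(x) + p·x > 0} ). -/

import Mathlib

open scoped RealInnerProductSpace

noncomputable def vec {d : ℕ} (q : Fin d → ℤ) : EuclideanSpace ℝ (Fin d) :=
  WithLp.toLp 2 (fun i => (q i : ℝ))

lemma vec_add {d : ℕ} (q r : Fin d → ℤ) : vec (q + r) = vec q + vec r := by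
  ext i
  show ((q i + r i : ℤ) : ℝ) = (q i : ℝ) + (r i : ℝ)
  push_cast; ring

lemma inner_vec_single {d : ℕ} (p : EuclideanSpace ℝ (Fin d)) (i : Fin d) :
    ⟪vec (Pi.single i 1), p⟫ = p i := by
  simp only [PiLp.inner_apply, RCLike.inner_apply, conj_trivial, vec]
  rw [Finset.sum_eq_single i]
  · simp
  · intro j _ hj; simp [Pi.single_apply, hj]
  · simp

/-- If `p ∈ ℝ^d` is irrational and `v : ℝ^d → ℝ` is `ℤ^d`-periodic, then for every
`t ∈ ℝ` the superlevel set `{v(x) + p·x > t}` is the union of the translates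
`q + {v(x) + p·x > 0}` over all `q ∈ ℤ^d` with `q·p > t`. -/
theorem stmt15 (d : ℕ) (p : EuclideanSpace ℝ (Fin d))
    (hp : ¬ ∃ (lam : ℝ) (z : Fin d → ℤ), p = lam • vec z)
    (v : EuclideanSpace ℝ (Fin d) → ℝ)
    (hper : ∀ x, ∀ q : Fin d → ℤ, v (x + vec q) = v x) (t : ℝ) :
    {x : EuclideanSpace ℝ (Fin d) | t < v x + ⟪p, x⟫} =
      ⋃ q ∈ {q : Fin d → ℤ | t < ⟪vec q, p⟫},
        (fun x => vec q + x) '' {x : EuclideanSpace ℝ (Fin d) | 0 < v x + ⟪p, x⟫} := by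
  set φ : (Fin d → ℤ) →+ ℝ := AddMonoidHom.mk' (fun q => ⟪vec q, p⟫)
    (fun q r => by show ⟪vec (q + r), p⟫ = ⟪vec q, p⟫ + ⟪vec r, p⟫
                   rw [vec_add, inner_add_left]) with hφ
  have hdense : Dense (φ.range : Set ℝ) := by
    rcases AddSubgroup.dense_or_cyclic φ.range with h | ⟨a, ha⟩
    · exact h
    · exfalso
      apply hp
      have key : ∀ i, ∃ n : ℤ, p i = n • a := by
        intro i
        have hmem : p i ∈ φ.range := ⟨Pi.single i 1, inner_vec_single p i⟩
        rw [ha, AddSubgroup.mem_closure_singleton] at hmem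
        obtain ⟨n, hn⟩ := hmem
        exact ⟨n, hn.symm⟩
      choose z hz using key
      refine ⟨a, z, PiLp.ext fun i => ?_⟩
      have : (a • vec z) i = a * (z i : ℝ) := rfl
      rw [this, hz i, zsmul_eq_mul]
      ring
  ext x
  simp only [Set.mem_setOf_eq, Set.mem_iUnion, Set.mem_image, exists_prop]
  constructor
  · intro hx
    obtain ⟨c, hc, hct, hcs⟩ := hdense.exists_between hx
    obtain ⟨q, hq⟩ := hc
    have hqc : ⟪vec q, p⟫ = c := hq
    refine ⟨q, by simpa [hqc] using hct, x - vec q, ?_, by abel⟩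
    have hv : v (x - vec q) = v x := by
      have := hper (x - vec q) q
      rw [sub_add_cancel] at this
      exact this.symm
    have hi : ⟪p, x - vec q⟫ = ⟪p, x⟫ - c := by
      rw [inner_sub_right, ← real_inner_comm p (vec q), hqc]
    simp only [Set.mem_setOf_eq, hv, hi]
    linarith
  · rintro ⟨q, hq, y, hy, rfl⟩
    have hv : v (vec q + y) = v y := by
      rw [add_comm]; exact hper y q
    have hi : ⟪p, vec q + y⟫ = ⟪vec q, p⟫ + ⟪p, y⟫ := by
      rw [inner_add_right, real_inner_comm p (vec q)]
    have hy' : 0 < v y + ⟪p, y⟫ := hy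
    show t < v (vec q + y) + ⟪p, vec q + y⟫
    rw [hv, hi]
    linarith
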